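/- For symmetric matrices K, M ∈ ℝ^{L×L} with H K H ≠ 0 and H M H ≠ 0, CKA(K, M) = 1 if and only if there exists a real constant c > 0 such that H K H = c · H M H. -/

import Mathlib

open Matrix
open RealInnerProductSpace

/-- The centering matrix `H = I - (1/L) 𝟙𝟙ᵀ`. -/
noncomputable def centering (L : ℕ) : Matrix (Fin L) (Fin L) ℝ :=
  1 - (L : ℝ)⁻¹ • Matrix.vecMulVec (fun _ => (1 : ℝ)) (fun _ => (1 : ℝ))

/-- The empirical Hilbert–Schmidt Independence Criterion
`HSIC(K, M) = tr(K H M H) / (L-1)²`. -/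
noncomputable def HSIC (L : ℕ) (K M : Matrix (Fin L) (Fin L) ℝ) : ℝ :=
  (K * centering L * M * centering L).trace / ((L : ℝ) - 1) ^ 2

/-- The Centered Kernel Alignment
`CKA(K, M) = HSIC(K, M) / √(HSIC(K, K) · HSIC(M, M))`. -/
noncomputable def CKA (L : ℕ) (K M : Matrix (Fin L) (Fin L) ℝ) : ℝ :=
  HSIC L K M / Real.sqrt (HSIC L K K * HSIC L M M)

/-- The Frobenius norm of a matrix. -/
noncomputable def frob {m n : Type*} [Fintype m] [Fintype n]
    (A : Matrix m n ℝ) : ℝ :=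
  Real.sqrt (∑ i, ∑ j, (A i j) ^ 2)

theorem cka_eq_one_iff (L : ℕ) (hL : 2 ≤ L)
    (K M : Matrix (Fin L) (Fin L) ℝ) (hK : Kᵀ = K) (hM : Mᵀ = M)
    (hKc : centering L * K * centering L ≠ 0)
    (hMc : centering L * M * centering L ≠ 0) :
    CKA L K M = 1 ↔
      ∃ c : ℝ, 0 < c ∧
        centering L * K * centering L = c • (centering L * M * centering L) := by
  have hLne : (L : ℝ) ≠ 0 := Nat.cast_ne_zero.mpr (by omega)
  set H : Matrix (Fin L) (Fin L) ℝ := centering L with hHdef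
  set J : Matrix (Fin L) (Fin L) ℝ :=
    Matrix.vecMulVec (fun _ => (1 : ℝ)) (fun _ => (1 : ℝ)) with hJdef
  have hHt : Hᵀ = H := by
    ext i j
    simp [hHdef, centering, Matrix.one_apply, Matrix.vecMulVec_apply, eq_comm]
  have hJJ : J * J = (L : ℝ) • J := by
    ext i j
    simp [hJdef, Matrix.mul_apply, Matrix.vecMulVec_apply]
  have hHH : H * H = H := by
    have : H * H = 1 - (L:ℝ)⁻¹ • J - ((L:ℝ)⁻¹ • J - ((L:ℝ)⁻¹ * (L:ℝ)⁻¹) • (J * J)) := by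
      rw [hHdef, centering, ← hJdef]
      rw [sub_mul, one_mul, mul_sub, mul_one, smul_mul_assoc, mul_smul_comm, smul_smul]
    rw [this, hJJ, smul_smul]
    have h2 : (L:ℝ)⁻¹ * (L:ℝ)⁻¹ * L = (L:ℝ)⁻¹ := by field_simp
    rw [h2, sub_self, sub_zero, hHdef, centering, hJdef]
  set A : Matrix (Fin L) (Fin L) ℝ := H * K * H with hAdef
  set B : Matrix (Fin L) (Fin L) ℝ := H * M * H with hBdef
  have hAt : Aᵀ = A := by rw [hAdef, Matrix.transpose_mul, Matrix.transpose_mul, hHt, hK, Matrix.mul_assoc]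
  have hBt : Bᵀ = B := by rw [hBdef, Matrix.transpose_mul, Matrix.transpose_mul, hHt, hM, Matrix.mul_assoc]
  have hHX : ∀ X : Matrix (Fin L) (Fin L) ℝ, H * (H * X) = H * X := fun X => by
    rw [← Matrix.mul_assoc, hHH]
  -- trace identity
  have key : ∀ P Q : Matrix (Fin L) (Fin L) ℝ, Qᵀ = Q →
      (P * H * Q * H).trace = ((H * P * H) * (H * Q * H)).trace := by
    intro P Q hQ
    have h1 : (H * P * H) * (H * Q * H) = H * (P * H * Q * H) := by
      simp only [Matrix.mul_assoc, hHX]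
    rw [h1, Matrix.trace_mul_comm H (P * H * Q * H)]
    have h2 : P * H * Q * H * H = P * H * Q * H := by
      simp only [Matrix.mul_assoc]
      rw [hHH]
    rw [h2]
  -- vector embedding
  set v : Matrix (Fin L) (Fin L) ℝ → EuclideanSpace ℝ (Fin L × Fin L) :=
    fun X => WithLp.toLp 2 (fun p : Fin L × Fin L => X p.1 p.2) with hvdef
  have tr_eq : ∀ X Y : Matrix (Fin L) (Fin L) ℝ, Yᵀ = Y →
      (X * Y).trace = ⟪v X, v Y⟫ := by
    intro X Y hY
    rw [PiLp.inner_apply]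
    simp only [RCLike.inner_apply, starRingEnd_apply, star_trivial]
    rw [Matrix.trace, Fintype.sum_prod_type]
    simp only [Matrix.diag_apply, Matrix.mul_apply, hvdef]
    refine Finset.sum_congr rfl fun i _ => Finset.sum_congr rfl fun j _ => ?_
    have h := congrFun (congrFun hY i) j
    rw [Matrix.transpose_apply] at h
    rw [h, mul_comm]
  have hinner : ∀ P Q : Matrix (Fin L) (Fin L) ℝ, Pᵀ = P → Qᵀ = Q →
      ((H * P * H) * (H * Q * H)).trace = ⟪v (H * P * H), v (H * Q * H)⟫ := by
    intro P Q hP hQ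
    have hQt : (H * Q * H)ᵀ = H * Q * H := by
      rw [Matrix.transpose_mul, Matrix.transpose_mul, hHt, hQ, Matrix.mul_assoc]
    exact tr_eq _ _ hQt
  have hd : ((L : ℝ) - 1) ^ 2 > 0 := by
    have : (2:ℝ) ≤ (L:ℝ) := by exact_mod_cast hL
    nlinarith
  have hKM : HSIC L K M = ⟪v A, v B⟫ / ((L:ℝ)-1)^2 := by
    rw [HSIC, key K M hM, hinner K M hK hM]
  have hKK : HSIC L K K = ‖v A‖^2 / ((L:ℝ)-1)^2 := by
    rw [HSIC, key K K hK, hinner K K hK hK, real_inner_self_eq_norm_sq]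
  have hMM : HSIC L M M = ‖v B‖^2 / ((L:ℝ)-1)^2 := by
    rw [HSIC, key M M hM, hinner M M hM hM, real_inner_self_eq_norm_sq]
  have hvB : v B ≠ 0 := by
    intro h
    apply hMc
    ext i j
    have := congrArg (fun w => w (i, j)) h
    simpa [hvdef] using this
  have hvA : v A ≠ 0 := by
    intro h
    apply hKc
    ext i j
    have := congrArg (fun w => w (i, j)) h
    simpa [hvdef] using this
  have hsqrt : Real.sqrt (HSIC L K K * HSIC L M M) = ‖v A‖ * ‖v B‖ / ((L:ℝ)-1)^2 := by
    rw [hKK, hMM]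
    rw [show ‖v A‖^2 / ((L:ℝ)-1)^2 * (‖v B‖^2 / ((L:ℝ)-1)^2)
        = (‖v A‖ * ‖v B‖ / ((L:ℝ)-1)^2)^2 by ring]
    exact Real.sqrt_sq (by positivity)
  have hCKA : CKA L K M = ⟪v A, v B⟫ / (‖v A‖ * ‖v B‖) := by
    rw [CKA, hKM, hsqrt]
    have hA' : ‖v A‖ ≠ 0 := norm_ne_zero_iff.mpr hvA
    have hB' : ‖v B‖ ≠ 0 := norm_ne_zero_iff.mpr hvB
    have hL1 : (L:ℝ) - 1 ≠ 0 := by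
      have : (2:ℝ) ≤ (L:ℝ) := by exact_mod_cast hL
      linarith
    field_simp
  rw [hCKA, real_inner_comm, mul_comm ‖v A‖ ‖v B‖]
  rw [real_inner_div_norm_mul_norm_eq_one_iff (v B) (v A)]
  constructor
  · rintro ⟨-, r, hr, hrA⟩
    refine ⟨r, hr, ?_⟩
    ext i j
    have := congrArg (fun w => w (i, j)) hrA
    simpa [hvdef] using this
  · rintro ⟨c, hc, hcA⟩
    refine ⟨hvB, c, hc, ?_⟩
    ext p
    have := congrFun (congrFun hcA p.1) p.2
    simpa [hvdef] using this
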